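/- arXiv:1812.00856 — 2 statements merged into one kernel-verified Lean document; each statement's English description precedes it below -/
import Mathlib

section
/- Let f(μ₁, μᵢ) = (μ₁ − μᵢ)/D(μᵢ‖μ₁) on the domain {(μ₁, μᵢ) ∈ (0,1)² : μ₁ > μᵢ}. Then the partial derivative of f with respect to μ₁ is nonpositive everywhere on this domain. -/
noncomputable def binKL (a b : ℝ) : ℝ :=
  a * Real.log (a / b) + (1 - a) * Real.log ((1 - a) / (1 - b))

/-- On the domain {(μ₁, μᵢ) ∈ (0,1)² : μ₁ > μᵢ}, the partial derivative of
f(μ₁, μᵢ) = (μ₁ − μᵢ)/D(μᵢ‖μ₁) with respect to μ₁ is nonpositive. -/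
theorem deriv_f_mu1_nonpos (μ1 μi : ℝ) (h1 : μ1 ∈ Set.Ioo (0:ℝ) 1)
    (hi : μi ∈ Set.Ioo (0:ℝ) 1) (hlt : μi < μ1) :
    deriv (fun x => (x - μi) / binKL μi x) μ1 ≤ 0 := by
  obtain ⟨h10, h11⟩ := h1
  obtain ⟨hi0, hi1⟩ := hi
  have hμ1 : μ1 ≠ 0 := ne_of_gt h10
  have h1μ1pos : (0:ℝ) < 1 - μ1 := by linarith
  have h1μ1 : (1:ℝ) - μ1 ≠ 0 := ne_of_gt h1μ1pos
  have h1μipos : (0:ℝ) < 1 - μi := by linarith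
  -- derivative of binKL μi at μ1
  have hd1 : HasDerivAt (fun x : ℝ => μi / x) (-μi / μ1 ^ 2) μ1 := by
    simpa [div_eq_mul_inv, mul_comm, neg_div] using (hasDerivAt_inv hμ1).const_mul μi
  have hlog1 : HasDerivAt (fun x : ℝ => Real.log (μi / x)) (-(1 / μ1)) μ1 := by
    have := hd1.log (by positivity)
    convert this using 1
    field_simp
  have hd2 : HasDerivAt (fun x : ℝ => (1 - μi) / (1 - x)) ((1 - μi) / (1 - μ1) ^ 2) μ1 := by
    have hinner : HasDerivAt (fun x : ℝ => 1 - x) (-1) μ1 := by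
      simpa using (hasDerivAt_id μ1).const_sub 1
    have := (hinner.inv h1μ1).const_mul (1 - μi)
    convert this using 1
    · rfl
    · rfl
    · funext x; simp [div_eq_mul_inv]
    · ring
  have hlog2 : HasDerivAt (fun x : ℝ => Real.log ((1 - μi) / (1 - x))) (1 / (1 - μ1)) μ1 := by
    have := hd2.log (by positivity)
    convert this using 1
    field_simp
  have hD : HasDerivAt (fun x : ℝ => binKL μi x)
      ((μ1 - μi) / (μ1 * (1 - μ1))) μ1 := by
    have := (hlog1.const_mul μi).add (hlog2.const_mul (1 - μi))
    have heq : (fun x : ℝ => binKL μi x) =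
        fun x => μi * Real.log (μi / x) + (1 - μi) * Real.log ((1 - μi) / (1 - x)) := rfl
    rw [heq]
    convert this using 1
    · rfl
    · rfl
    · rfl
    · field_simp
      ring
  -- positivity of binKL μi μ1
  have hDpos : 0 < binKL μi μ1 := by
    have l1 : Real.log (μ1 / μi) < μ1 / μi - 1 :=
      Real.log_lt_sub_one_of_pos (by positivity) (by
        intro h
        have : μ1 = μi := by field_simp at h; linarith
        linarith)
    have l2 : Real.log ((1 - μ1) / (1 - μi)) < (1 - μ1) / (1 - μi) - 1 :=
      Real.log_lt_sub_one_of_pos (by positivity) (by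
        intro h
        have h' : 1 - μ1 = 1 - μi := by
          field_simp at h; linarith
        linarith)
    have e1 : Real.log (μi / μ1) = -Real.log (μ1 / μi) := by
      rw [← Real.log_inv]; congr 1; field_simp
    have e2 : Real.log ((1 - μi) / (1 - μ1)) = -Real.log ((1 - μ1) / (1 - μi)) := by
      rw [← Real.log_inv]; congr 1; field_simp
    have hq1 : μ1 / μi - 1 = (μ1 - μi) / μi := by field_simp
    have hq2 : (1 - μ1) / (1 - μi) - 1 = (μi - μ1) / (1 - μi) := by field_simp; ring
    unfold binKL
    rw [e1, e2]
    have b1 : μi * -Real.log (μ1 / μi) > μi * -((μ1 - μi) / μi) := by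
      rw [hq1] at l1; nlinarith
    have b2 : (1 - μi) * -Real.log ((1 - μ1) / (1 - μi)) >
        (1 - μi) * -((μi - μ1) / (1 - μi)) := by
      rw [hq2] at l2; nlinarith
    have : μi * -((μ1 - μi) / μi) + (1 - μi) * -((μi - μ1) / (1 - μi)) = 0 := by
      field_simp; ring
    linarith
  have hDne : binKL μi μ1 ≠ 0 := ne_of_gt hDpos
  -- derivative of f
  have hnum : HasDerivAt (fun x : ℝ => x - μi) 1 μ1 := by
    simpa using (hasDerivAt_id μ1).sub_const μi
  have hf : HasDerivAt (fun x => (x - μi) / binKL μi x)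
      ((1 * binKL μi μ1 - (μ1 - μi) * ((μ1 - μi) / (μ1 * (1 - μ1)))) / (binKL μi μ1) ^ 2)
      μ1 := hnum.div hD hDne
  rw [hf.deriv]
  apply div_nonpos_of_nonpos_of_nonneg _ (sq_nonneg _)
  -- key inequality: binKL μi μ1 ≤ (μ1 - μi)^2 / (μ1 (1 - μ1))
  have l1 : Real.log (μi / μ1) ≤ μi / μ1 - 1 :=
    Real.log_le_sub_one_of_pos (by positivity)
  have l2 : Real.log ((1 - μi) / (1 - μ1)) ≤ (1 - μi) / (1 - μ1) - 1 :=
    Real.log_le_sub_one_of_pos (by positivity)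
  have key : binKL μi μ1 ≤ (μ1 - μi) * ((μ1 - μi) / (μ1 * (1 - μ1))) := by
    unfold binKL
    have b1 : μi * Real.log (μi / μ1) ≤ μi * (μi / μ1 - 1) := by nlinarith
    have b2 : (1 - μi) * Real.log ((1 - μi) / (1 - μ1)) ≤
        (1 - μi) * ((1 - μi) / (1 - μ1) - 1) := by nlinarith
    have e : μi * (μi / μ1 - 1) + (1 - μi) * ((1 - μi) / (1 - μ1) - 1) =
        (μ1 - μi) * ((μ1 - μi) / (μ1 * (1 - μ1))) := by
      field_simp
      ring
    linarith
  linarith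
end

section
/- Let f(μ₁, μᵢ) = (μ₁ − μᵢ)/D(μᵢ‖μ₁) on the domain {(μ₁, μᵢ) ∈ (0,1)² : μ₁ > μᵢ}. Then the partial derivative of f with respect to μᵢ equals D(μ₁‖μᵢ)/D(μᵢ‖μ₁)², and in particular is nonnegative on this domain. -/
lemma binKL_pos {a b : ℝ} (ha : a ∈ Set.Ioo (0:ℝ) 1) (hb : b ∈ Set.Ioo (0:ℝ) 1)
    (hab : a ≠ b) : 0 < binKL a b := by
  obtain ⟨ha0, ha1⟩ := ha
  obtain ⟨hb0, hb1⟩ := hb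
  have key1 : Real.log (b / a) < b / a - 1 :=
    Real.log_lt_sub_one_of_pos (div_pos hb0 ha0)
      (by intro h; exact hab (by field_simp at h; linarith))
  have key2 : Real.log ((1 - b) / (1 - a)) < (1 - b) / (1 - a) - 1 :=
    Real.log_lt_sub_one_of_pos (div_pos (by linarith) (by linarith))
      (by intro h; rw [div_eq_one_iff_eq (by linarith : (1:ℝ) - a ≠ 0)] at h
          exact hab (by linarith))
  have e1 : Real.log (a / b) = - Real.log (b / a) := by
    rw [← Real.log_inv]; congr 1; field_simp
  have e2 : Real.log ((1 - a) / (1 - b)) = - Real.log ((1 - b) / (1 - a)) := by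
    rw [← Real.log_inv]; congr 1; field_simp
  have h1 : a * Real.log (a / b) > a - b := by
    rw [e1]
    have := mul_lt_mul_of_pos_left key1 ha0
    have ha' : a * (b / a) = b := by field_simp
    nlinarith
  have h2 : (1 - a) * Real.log ((1 - a) / (1 - b)) > b - a := by
    rw [e2]
    have := mul_lt_mul_of_pos_left key2 (by linarith : (0:ℝ) < 1 - a)
    have ha' : (1 - a) * ((1 - b) / (1 - a)) = 1 - b := by
      rw [mul_comm]; exact div_mul_cancel₀ _ (by linarith)
    nlinarith
  unfold binKL
  linarith

/-- On the domain {(μ₁, μᵢ) ∈ (0,1)² : μ₁ > μᵢ}, the partial derivative of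
f(μ₁, μᵢ) = (μ₁ − μᵢ)/D(μᵢ‖μ₁) with respect to μᵢ equals
D(μ₁‖μᵢ)/D(μᵢ‖μ₁)², and in particular is nonnegative. -/
theorem deriv_f_mui (μ1 μi : ℝ) (h1 : μ1 ∈ Set.Ioo (0:ℝ) 1)
    (hi : μi ∈ Set.Ioo (0:ℝ) 1) (hlt : μi < μ1) :
    deriv (fun y => (μ1 - y) / binKL y μ1) μi
      = binKL μ1 μi / (binKL μi μ1) ^ 2 ∧
    0 ≤ deriv (fun y => (μ1 - y) / binKL y μ1) μi := by
  obtain ⟨h10, h11⟩ := h1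
  obtain ⟨hi0, hi1⟩ := hi
  set L : ℝ := Real.log μi - Real.log μ1 - (Real.log (1 - μi) - Real.log (1 - μ1)) with hL
  -- derivative of G y = y*(log y - log μ1) + (1-y)*(log(1-y) - log(1-μ1))
  have hG1 : HasDerivAt (fun y : ℝ => y * (Real.log y - Real.log μ1))
      (1 * (Real.log μi - Real.log μ1) + μi * μi⁻¹) μi :=
    (hasDerivAt_id μi).mul ((Real.hasDerivAt_log hi0.ne').sub_const _)
  have hinner : HasDerivAt (fun y : ℝ => Real.log (1 - y) - Real.log (1 - μ1))
      ((1 - μi)⁻¹ * (-1)) μi := by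
    have h0 : HasDerivAt (fun y : ℝ => 1 - y) (-1) μi := by
      simpa using (hasDerivAt_id μi).const_sub 1
    exact ((Real.hasDerivAt_log (by linarith : (1:ℝ) - μi ≠ 0)).comp μi h0).sub_const _
  have hG2 : HasDerivAt (fun y : ℝ => (1 - y) * (Real.log (1 - y) - Real.log (1 - μ1)))
      ((-1) * (Real.log (1 - μi) - Real.log (1 - μ1)) + (1 - μi) * ((1 - μi)⁻¹ * (-1))) μi := by
    have h0 : HasDerivAt (fun y : ℝ => 1 - y) (-1) μi := by
      simpa using (hasDerivAt_id μi).const_sub 1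
    exact h0.mul hinner
  have hG : HasDerivAt (fun y : ℝ => y * (Real.log y - Real.log μ1)
      + (1 - y) * (Real.log (1 - y) - Real.log (1 - μ1))) L μi := by
    have := hG1.add hG2
    refine this.congr_deriv ?_
    rw [hL, mul_inv_cancel₀ hi0.ne',
      show (1 - μi) * ((1 - μi)⁻¹ * (-1)) = -1 by
        rw [← mul_assoc, mul_inv_cancel₀ (by linarith : (1:ℝ) - μi ≠ 0)]; ring]
    ring
  -- G agrees with binKL · μ1 near μi
  have heq : (fun y : ℝ => y * (Real.log y - Real.log μ1)
      + (1 - y) * (Real.log (1 - y) - Real.log (1 - μ1)))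
      =ᶠ[nhds μi] (fun y => binKL y μ1) := by
    filter_upwards [Ioo_mem_nhds hi0 hi1] with y hy
    obtain ⟨hy0, hy1⟩ := hy
    unfold binKL
    rw [Real.log_div hy0.ne' h10.ne', Real.log_div (by linarith) (by linarith : (1:ℝ) - μ1 ≠ 0)]
  have hB : HasDerivAt (fun y => binKL y μ1) L μi := hG.congr_of_eventuallyEq heq.symm
  have hBne : binKL μi μ1 ≠ 0 := (binKL_pos ⟨hi0, hi1⟩ ⟨h10, h11⟩ hlt.ne).ne'
  have hc : HasDerivAt (fun y : ℝ => μ1 - y) (-1) μi := by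
    simpa using (hasDerivAt_id μi).const_sub μ1
  have hf : HasDerivAt (fun y => (μ1 - y) / binKL y μ1)
      (((-1) * binKL μi μ1 - (μ1 - μi) * L) / (binKL μi μ1) ^ 2) μi := hc.div hB hBne
  have hnum : (-1) * binKL μi μ1 - (μ1 - μi) * L = binKL μ1 μi := by
    unfold binKL
    rw [hL, Real.log_div hi0.ne' h10.ne',
      Real.log_div (by linarith : (1:ℝ) - μi ≠ 0) (by linarith : (1:ℝ) - μ1 ≠ 0),
      Real.log_div h10.ne' hi0.ne',
      Real.log_div (by linarith : (1:ℝ) - μ1 ≠ 0) (by linarith : (1:ℝ) - μi ≠ 0)]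
    ring
  have hd := hf.deriv
  rw [hnum] at hd
  refine ⟨hd, ?_⟩
  rw [hd]
  exact div_nonneg (binKL_pos ⟨h10, h11⟩ ⟨hi0, hi1⟩ hlt.ne').le (sq_nonneg _)
end
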